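/- Let θ be a constant and κ, τ, ρ, f₃ : I → ℝ differentiable with κ > 0, f₃ nowhere zero, φ := τ/κ, satisfying f₃' = -θτ and φ' = (θκ(1+φ²) + ρ)/f₃ with φ' nowhere zero on I. Then θ·(κ(1+φ²)/φ')' + (ρ/φ')' + θκφ = 0 on I. -/

import Mathlib

/-- Theorem 5.2: a concircular curve with `T(φ) ≠ 0` satisfies the ODE
`θ (κ(1+φ²)/φ')' + (ρ/φ')' + θκφ = 0`, where `φ = τ/κ`. -/
theorem concircular_curve_ode (a b θ : ℝ) (κ τ ρ f₃ φ : ℝ → ℝ)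
    (hκpos : ∀ s ∈ Set.Ioo a b, 0 < κ s)
    (hf₃ : ∀ s ∈ Set.Ioo a b, f₃ s ≠ 0)
    (hφ : ∀ s ∈ Set.Ioo a b, φ s = τ s / κ s)
    (hκd : ∀ s ∈ Set.Ioo a b, DifferentiableAt ℝ κ s)
    (hρd : ∀ s ∈ Set.Ioo a b, DifferentiableAt ℝ ρ s)
    (hτd : ∀ s ∈ Set.Ioo a b, DifferentiableAt ℝ τ s)
    (hφd : ∀ s ∈ Set.Ioo a b, DifferentiableAt ℝ φ s)
    (hf₃' : ∀ s ∈ Set.Ioo a b, HasDerivAt f₃ (-(θ * τ s)) s)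
    (hφ' : ∀ s ∈ Set.Ioo a b,
      deriv φ s = (θ * κ s * (1 + φ s ^ 2) + ρ s) / f₃ s)
    (hφ'ne : ∀ s ∈ Set.Ioo a b, deriv φ s ≠ 0) :
    ∀ s ∈ Set.Ioo a b,
      θ * deriv (fun t => κ t * (1 + φ t ^ 2) / deriv φ t) s
        + deriv (fun t => ρ t / deriv φ t) s + θ * κ s * φ s = 0 := by
  intro s hs
  have hmem : Set.Ioo a b ∈ nhds s := isOpen_Ioo.mem_nhds hs
  have hev : ∀ᶠ t in nhds s, t ∈ Set.Ioo a b := hmem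
  -- deriv φ equals the formula near s
  have hφ'ev : deriv φ =ᶠ[nhds s]
      fun t => (θ * κ t * (1 + φ t ^ 2) + ρ t) / f₃ t :=
    hev.mono fun t ht => hφ' t ht
  have hexpr : DifferentiableAt ℝ
      (fun t => (θ * κ t * (1 + φ t ^ 2) + ρ t) / f₃ t) s := by
    exact DifferentiableAt.div
      ((((differentiableAt_const θ).mul (hκd s hs)).mul
        ((differentiableAt_const 1).add ((hφd s hs).pow 2))).add (hρd s hs))
      (hf₃' s hs).differentiableAt (hf₃ s hs)
  have hdφ'd : DifferentiableAt ℝ (deriv φ) s :=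
    hexpr.congr_of_eventuallyEq hφ'ev
  have hg : DifferentiableAt ℝ (fun t => κ t * (1 + φ t ^ 2) / deriv φ t) s :=
    DifferentiableAt.div
      ((hκd s hs).mul ((differentiableAt_const 1).add ((hφd s hs).pow 2)))
      hdφ'd (hφ'ne s hs)
  have hh : DifferentiableAt ℝ (fun t => ρ t / deriv φ t) s :=
    (hρd s hs).div hdφ'd (hφ'ne s hs)
  -- the combination equals f₃ near s
  have hkey : (fun t => θ * (κ t * (1 + φ t ^ 2) / deriv φ t)
      + ρ t / deriv φ t) =ᶠ[nhds s] f₃ := by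
    refine hev.mono fun t ht => ?_
    have h1 : deriv φ t = (θ * κ t * (1 + φ t ^ 2) + ρ t) / f₃ t := hφ' t ht
    have h2 : deriv φ t ≠ 0 := hφ'ne t ht
    have h3 : f₃ t ≠ 0 := hf₃ t ht
    field_simp at h1 ⊢
    nlinarith [h1]
  have hderiv : deriv (fun t => θ * (κ t * (1 + φ t ^ 2) / deriv φ t)
      + ρ t / deriv φ t) s = -(θ * τ s) := by
    rw [hkey.deriv_eq, (hf₃' s hs).deriv]
  rw [deriv_fun_add ((differentiableAt_const θ).fun_mul hg) hh,
    deriv_const_mul θ hg] at hderiv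
  have hτs : κ s * φ s = τ s := by
    rw [hφ s hs]; field_simp [(hκpos s hs).ne']
  rw [hderiv]
  linear_combination θ * hτs
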